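/- arXiv:1202.0199 — 2 statements merged into one kernel-verified Lean document; each statement's English description precedes it below -/
import Mathlib

section
/- For integers 0 < m < n, the cyclotomic polynomial Φ_n(q) divides the q-binomial coefficient binom(n,m)_q in ℤ[q]. -/
open Polynomial Finset

/-- The Gaussian (q-)binomial coefficient as a polynomial, satisfying the
product formula `∏_{i=n-m+1}^{n}(1-q^i) / ∏_{i=1}^{m}(1-q^i)`. -/
noncomputable def qbinom (R : Type*) [CommRing R] : ℕ → ℕ → Polynomial R
  | _, 0 => 1
  | 0, _+1 => 0
  | n+1, m+1 => qbinom R n (m+1) + X ^ (n - m) * qbinom R n m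

lemma qbinom_zero (R : Type*) [CommRing R] (n : ℕ) : qbinom R n 0 = 1 := by
  cases n <;> rfl

lemma qbinom_eq_zero (R : Type*) [CommRing R] : ∀ n m : ℕ, n < m → qbinom R n m = 0
  | 0, _+1, _ => rfl
  | n+1, m+1, h => by
    show qbinom R n (m+1) + X ^ (n - m) * qbinom R n m = 0
    rw [qbinom_eq_zero R n (m+1) (by omega), qbinom_eq_zero R n m (by omega),
      mul_zero, add_zero]

lemma qbinom_self (R : Type*) [CommRing R] (n : ℕ) : qbinom R n n = 1 := by
  induction n with
  | zero => rfl
  | succ n ih =>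
    show qbinom R n (n+1) + X ^ (n - n) * qbinom R n n = 1
    rw [qbinom_eq_zero R n (n+1) (by omega), ih, Nat.sub_self, pow_zero, mul_one, zero_add]

lemma qbinom_mul_prod (n m : ℕ) (h : m ≤ n) :
    qbinom ℤ n m * ∏ i ∈ Ioc 0 m, (X ^ i - 1) = ∏ i ∈ Ioc (n - m) n, (X ^ i - 1) := by
  induction n generalizing m with
  | zero =>
    interval_cases m
    simp [qbinom_zero]
  | succ n ih =>
    match m with
    | 0 => simp [qbinom_zero]
    | m + 1 =>
      rcases eq_or_lt_of_le h with heq | hlt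
      · rw [← heq, qbinom_self, Nat.sub_self, one_mul]
      · have hmn : m + 1 ≤ n := Nat.lt_succ_iff.mp hlt
        have hmn' : m ≤ n := le_trans (Nat.le_succ m) hmn
        have key : n + 1 - (m + 1) = n - m := by omega
        show (qbinom ℤ n (m+1) + X ^ (n - m) * qbinom ℤ n m) * _ = _
        rw [key]
        have hsplit : ∏ i ∈ Ioc 0 (m+1), (X ^ i - 1 : ℤ[X]) =
            (∏ i ∈ Ioc 0 m, (X ^ i - 1)) * (X ^ (m+1) - 1) :=
          prod_Ioc_succ_top (Nat.zero_le m) _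
        have htop : ∏ i ∈ Ioc (n - m) (n + 1), (X ^ i - 1 : ℤ[X]) =
            (∏ i ∈ Ioc (n - m) n, (X ^ i - 1)) * (X ^ (n+1) - 1) :=
          prod_Ioc_succ_top (Nat.sub_le n m) _
        have hbot : ∏ i ∈ Ioc (n - (m+1)) n, (X ^ i - 1 : ℤ[X]) =
            (X ^ (n - m) - 1) * ∏ i ∈ Ioc (n - m) n, (X ^ i - 1) := by
          have h1 : n - (m + 1) + 1 = n - m := by omega
          have h2 : Ioc (n - (m+1)) n = Icc (n - m) n := by
            rw [← h1, Finset.Icc_add_one_left_eq_Ioc]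
          rw [h2, Finset.Icc_eq_cons_Ioc (Nat.sub_le n m), prod_cons]
        rw [add_mul, ih (m+1) hmn, hbot, hsplit, htop]
        have hpow : (X : ℤ[X]) ^ (n - m) * X ^ (m + 1) = X ^ (n + 1) := by
          rw [← pow_add]; congr 1; omega
        linear_combination (X:ℤ[X]) ^ (n - m) * (X ^ (m+1) - 1) * ih m hmn' +
          (∏ i ∈ Ioc (n - m) n, ((X:ℤ[X]) ^ i - 1)) * hpow

theorem cyclotomic_dvd_qbinom (n m : ℕ) (h0 : 0 < m) (hmn : m < n) :
    Polynomial.cyclotomic n ℤ ∣ qbinom ℤ n m := by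
  have hprime : Prime (cyclotomic n ℤ) :=
    (UniqueFactorizationMonoid.irreducible_iff_prime.mp
      (cyclotomic.irreducible (lt_trans h0 hmn)))
  have hkey := qbinom_mul_prod n m (le_of_lt hmn)
  have hdvd : cyclotomic n ℤ ∣ ∏ i ∈ Ioc (n - m) n, (X ^ i - 1 : ℤ[X]) :=
    dvd_trans (cyclotomic.dvd_X_pow_sub_one n ℤ)
      (Finset.dvd_prod_of_mem _ (by simp [Finset.mem_Ioc]; omega))
  rw [← hkey] at hdvd
  rcases hprime.dvd_mul.mp hdvd with h | h
  · exact h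
  · exfalso
    obtain ⟨i, hi, hdi⟩ := hprime.exists_mem_finset_dvd h
    rw [Finset.mem_Ioc] at hi
    rw [← prod_cyclotomic_eq_X_pow_sub_one hi.1 ℤ] at hdi
    obtain ⟨d, hd, hdd⟩ := hprime.exists_mem_finset_dvd hdi
    rw [Nat.mem_divisors] at hd
    have hd0 : 0 < d := Nat.pos_of_dvd_of_pos hd.1 hi.1
    have : cyclotomic n ℤ = cyclotomic d ℤ :=
      eq_of_monic_of_associated (cyclotomic.monic n ℤ) (cyclotomic.monic d ℤ)
        ((cyclotomic.irreducible (lt_trans h0 hmn)).associated_of_dvd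
          (cyclotomic.irreducible hd0) hdd)
    have hnd : n = d := cyclotomic_injective this
    have : d ≤ i := Nat.le_of_dvd hi.1 hd.1
    omega
end

section
/- Let p be an odd prime, α ≥ 1, and 0 ≤ j < p^α. Then ∑_{m ≡ j (mod p^α), 0 ≤ m ≤ n} (-1)^{(m-j)/p^α} binom(n,m) ≡ 0 (mod p^f), where f = ∑_{t ≥ 1} ⌊ n/(2p^{α+t-1}) ⌉ and ⌊x⌉ denotes the nearest nonnegative integer to x (with ⌊x⌉ = 0 for x < 1/2 and half-integers rounding up). -/
open Finset Polynomial

/-- The nearest-nonnegative-integer rounding function, rounding halves up. -/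
noncomputable def nround (x : ℚ) : ℕ := (⌊x + 1 / 2⌋).toNat

lemma nround_eval (n m : ℕ) (hm : 0 < m) :
    nround ((n : ℚ) / (2 * m)) = (n + m) / (2 * m) := by
  unfold nround
  have h1 : (n : ℚ) / (2 * m) + 1 / 2 = ((n + m : ℕ) : ℚ) / ((2 * m : ℕ) : ℚ) := by
    have hm' : (0:ℚ) < (m:ℚ) := by exact_mod_cast hm
    push_cast; field_simp
  rw [h1, Int.floor_toNat, Nat.floor_div_natCast, Nat.floor_natCast]

lemma div_scale_le (q A B r : ℕ) (hq : 0 < q) (hr : r < q) :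
    (q * A + r) / (q * B) ≤ A / B := by
  rcases Nat.eq_zero_or_pos B with hB | hB
  · subst hB; simp
  have hqB : 0 < q * B := Nat.mul_pos hq hB
  set x := (q * A + r) / (q * B) with hx
  have h1 : x * (q * B) ≤ q * A + r := Nat.div_mul_le_self _ _
  have h3 : x * B < A + 1 := by
    have h2 : q * (x * B) < q * (A + 1) := by nlinarith
    exact lt_of_mul_lt_mul_left h2 (Nat.zero_le q)
  exact Nat.le_div_iff_mul_le hB |>.2 (Nat.lt_succ_iff.mp h3)

lemma sum_div_le (p : ℕ) (hp : 3 ≤ p) :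
    ∀ k, ∀ T, ∑ t ∈ range T, (k + p ^ t) / (2 * p ^ t) ≤ k := by
  intro k
  induction k using Nat.strong_induction_on with
  | _ k ih =>
    intro T
    rcases Nat.eq_zero_or_pos k with hk | hk
    · subst hk
      have h : ∀ t ∈ range T, (0 + p ^ t) / (2 * p ^ t) = 0 := by
        intro t _
        apply Nat.div_eq_of_lt
        have : 0 < p ^ t := Nat.pow_pos (n := t) (by omega)
        omega
      rw [Finset.sum_congr rfl h]; simp
    · rcases T with _ | T'
      · simp
      rw [Finset.sum_range_succ']
      have hstep : ∀ t, (k + p ^ (t + 1)) / (2 * p ^ (t + 1)) ≤ (k / p + p ^ t) / (2 * p ^ t) := by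
        intro t
        have hk' : k = p * (k / p) + k % p := (Nat.div_add_mod k p).symm
        have h1 : k + p ^ (t + 1) = p * (k / p + p ^ t) + k % p := by
          rw [pow_succ]; ring_nf; omega
        have h2 : 2 * p ^ (t + 1) = p * (2 * p ^ t) := by ring
        rw [h1, h2]
        exact div_scale_le p _ _ _ (by omega) (Nat.mod_lt _ (by omega))
      have hrest : ∑ t ∈ range T', (k + p ^ (t + 1)) / (2 * p ^ (t + 1)) ≤ k / p := by
        calc ∑ t ∈ range T', (k + p ^ (t + 1)) / (2 * p ^ (t + 1))
            ≤ ∑ t ∈ range T', (k / p + p ^ t) / (2 * p ^ t) :=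
              Finset.sum_le_sum (fun t _ => hstep t)
          _ ≤ k / p := ih (k / p) (Nat.div_lt_self hk (by omega)) T'
      have h0 : (k + p ^ 0) / (2 * p ^ 0) = (k + 1) / 2 := by norm_num
      have hp3 : k / p ≤ k / 3 := Nat.div_le_div_left hp (by omega)
      omega

lemma key_pdvd (p : ℕ) (hp : p.Prime) (α : ℕ) :
    ∃ g : ℤ[X], (X + 1) ^ (p ^ α) = (X ^ (p ^ α) + 1) + C (p : ℤ) * g := by
  have h : C (p:ℤ) ∣ ((X + 1) ^ (p ^ α) - (X ^ (p ^ α) + 1)) := by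
    rw [C_dvd_iff_dvd_coeff]
    intro i
    simp only [coeff_sub, coeff_X_add_one_pow, coeff_add, coeff_X_pow, coeff_one]
    rcases eq_or_ne i 0 with h0 | h0
    · subst h0
      have hq0 : p ^ α ≠ 0 := pow_ne_zero _ hp.pos.ne'
      simp [Ne.symm hq0]
    rcases eq_or_ne i (p ^ α) with hq | hq
    · subst hq
      simp [hp.ne_zero]
    · rw [if_neg hq, if_neg h0]
      have : (p:ℤ) ∣ ((p ^ α).choose i : ℤ) :=
        Int.natCast_dvd_natCast.2 (hp.dvd_choose_pow h0 hq)
      simpa using this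
  obtain ⟨g, hg⟩ := h
  exact ⟨g, by linear_combination hg⟩

lemma pow_rep (p : ℕ) (hp : p.Prime) (α : ℕ) (k r : ℕ) :
    ∃ G H : ℤ[X], (X + 1) ^ (p ^ α * k + r) =
      C ((p : ℤ) ^ k) * G + (X ^ (p ^ α) + 1) * H := by
  induction k with
  | zero => exact ⟨(X + 1) ^ r, 0, by simp⟩
  | succ k ih =>
    obtain ⟨G, H, hGH⟩ := ih
    obtain ⟨g, hg⟩ := key_pdvd p hp α
    refine ⟨g * G, C ((p:ℤ) ^ k) * G + (X ^ (p ^ α) + 1) * H + C (p:ℤ) * g * H, ?_⟩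
    have hsplit : (X + 1 : ℤ[X]) ^ (p ^ α * (k + 1) + r) =
        (X + 1) ^ (p ^ α) * (X + 1) ^ (p ^ α * k + r) := by
      rw [← pow_add]; ring_nf
    rw [hsplit, hg, hGH]
    simp only [C_pow] at *
    ring

lemma monomial_red (q a b : ℕ) :
    (X ^ q + 1 : ℤ[X]) ∣ X ^ (q * a + b) - C ((-1 : ℤ) ^ a) * X ^ b := by
  have h1 : (X ^ q + 1 : ℤ[X]) = X ^ q - (-1) := by ring
  have h2 : (X ^ q - (-1) : ℤ[X]) ∣ (X ^ q) ^ a - (-1) ^ a :=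
    sub_dvd_pow_sub_pow _ _ _
  rw [← h1] at h2
  have h3 : (X ^ (q * a + b) - C ((-1 : ℤ) ^ a) * X ^ b : ℤ[X]) =
      ((X ^ q) ^ a - (-1) ^ a) * X ^ b := by
    rw [pow_add, pow_mul]
    simp only [map_pow, map_neg, map_one]
    ring
  rw [h3]
  exact h2.mul_right _

theorem binomial_specialization_odd (p : ℕ) (hp : p.Prime) (hodd : Odd p)
    (α : ℕ) (hα : 1 ≤ α) (j : ℕ) (hj : j < p ^ α) (n : ℕ) :
    ((p : ℤ) ^ (∑ t ∈ Finset.range (n + 1), nround ((n : ℚ) / (2 * (p : ℚ) ^ (α + t)))) ∣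
      ∑ m ∈ (Finset.range (n + 1)).filter (fun m => m % p ^ α = j),
        (-1 : ℤ) ^ ((m - j) / p ^ α) * (n.choose m : ℤ)) := by
  have hp3 : 3 ≤ p := by
    have h2 : p ≠ 2 := by
      rintro rfl
      exact (by decide : ¬ Odd 2) hodd
    have := hp.two_le
    omega
  set q := p ^ α with hqdef
  have hq : 0 < q := Nat.pow_pos (n := α) (by omega)
  set k := n / q with hk
  set f := ∑ t ∈ Finset.range (n + 1), nround ((n : ℚ) / (2 * (p : ℚ) ^ (α + t))) with hf
  -- Step 1: f ≤ k
  have hfk : f ≤ k := by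
    have heval : ∀ t, nround ((n : ℚ) / (2 * (p : ℚ) ^ (α + t))) = (n + q * p ^ t) / (2 * (q * p ^ t)) := by
      intro t
      have h1 : ((p : ℚ) ^ (α + t)) = ((q * p ^ t : ℕ) : ℚ) := by
        push_cast [hqdef, pow_add]; ring
      rw [h1, nround_eval n _ (Nat.mul_pos hq (Nat.pow_pos (n := t) (by omega)))]
    have hterm : ∀ t, (n + q * p ^ t) / (2 * (q * p ^ t)) ≤ (k + p ^ t) / (2 * p ^ t) := by
      intro t
      have hn : n = q * k + n % q := (Nat.div_add_mod n q).symm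
      have h1 : n + q * p ^ t = q * (k + p ^ t) + n % q := by rw [Nat.mul_add]; omega
      have h2 : 2 * (q * p ^ t) = q * (2 * p ^ t) := by ring
      rw [h1, h2]
      exact div_scale_le q _ _ _ hq (Nat.mod_lt _ hq)
    calc f = ∑ t ∈ Finset.range (n + 1), nround ((n : ℚ) / (2 * (p : ℚ) ^ (α + t))) := hf
      _ ≤ ∑ t ∈ Finset.range (n + 1), (k + p ^ t) / (2 * p ^ t) := by
          apply Finset.sum_le_sum
          intro t _
          rw [heval t]; exact hterm t
      _ ≤ k := sum_div_le p hp3 k (n + 1)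
  -- Step 2: p^k divides the Fleck sum
  set D : ℤ[X] := X ^ q + 1 with hD
  have hmonic : D.Monic := by
    have : D = X ^ q + C 1 := by simp [hD]
    rw [this]
    exact monic_X_pow_add_C _ hq.ne'
  have hdegD : D.degree = q := by
    have : D = X ^ q + C 1 := by simp [hD]
    rw [this]
    exact degree_X_pow_add_C hq 1
  set P : ℤ[X] := ∑ m ∈ Finset.range (n + 1),
      C ((n.choose m : ℤ) * (-1) ^ (m / q)) * X ^ (m % q) with hP
  -- (X+1)^n = sum of monomials
  have hexp : (X + 1 : ℤ[X]) ^ n =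
      ∑ m ∈ Finset.range (n + 1), X ^ m * 1 ^ (n - m) * (n.choose m : ℤ[X]) := add_pow X 1 n
  have hdvdPdiff : D ∣ (X + 1 : ℤ[X]) ^ n - P := by
    rw [hexp, hP, ← Finset.sum_sub_distrib]
    apply Finset.dvd_sum
    intro m _
    have hm : X ^ m = (X ^ (q * (m / q) + m % q) : ℤ[X]) := by
      rw [Nat.div_add_mod]
    have h1 : (X:ℤ[X]) ^ m * 1 ^ (n - m) * (n.choose m : ℤ[X]) -
        C ((n.choose m : ℤ) * (-1) ^ (m / q)) * X ^ (m % q) =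
        C (n.choose m : ℤ) * (X ^ (q * (m / q) + m % q) - C ((-1 : ℤ) ^ (m / q)) * X ^ (m % q)) := by
      rw [← hm]
      push_cast
      simp only [map_mul, map_pow, map_neg, map_one, map_natCast]
      ring
    rw [h1]
    exact (monomial_red q (m / q) (m % q)).mul_left _
  have hdegP : P.degree < D.degree := by
    rw [hdegD]
    apply lt_of_le_of_lt (degree_sum_le _ _)
    apply Finset.sup_lt_iff (by exact_mod_cast WithBot.bot_lt_coe q) |>.2
    intro m _
    apply lt_of_le_of_lt (degree_C_mul_X_pow_le _ _)
    exact_mod_cast Nat.cast_lt.mpr (Nat.mod_lt _ hq)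
  -- combine with pow_rep
  obtain ⟨G, H, hGH⟩ := pow_rep p hp α k (n % q)
  have hn' : q * k + n % q = n := Nat.div_add_mod n q
  rw [hn'] at hGH
  obtain ⟨W, hW⟩ := hdvdPdiff
  have hPeq : P = C ((p:ℤ) ^ k) * G + D * (H - W) := by
    have : P = (X + 1) ^ n - D * W := by linear_combination -hW
    rw [this, hGH]; ring
  have hPmod : P = ((p:ℤ) ^ k) • (G %ₘ D) := by
    conv_lhs => rw [← (modByMonic_eq_self_iff hmonic).2 hdegP]
    rw [hPeq, add_modByMonic]
    have h2 : (D * (H - W)) %ₘ D = 0 :=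
      (modByMonic_eq_zero_iff_dvd hmonic).2 ⟨H - W, rfl⟩
    rw [h2, add_zero, ← smul_eq_C_mul, smul_modByMonic]
  have hcoeff : P.coeff j = (p:ℤ) ^ k * (G %ₘ D).coeff j := by
    rw [hPmod, coeff_smul, smul_eq_mul]
  have hdvd : (p : ℤ) ^ k ∣ P.coeff j := ⟨_, hcoeff⟩
  -- identify P.coeff j with the Fleck sum
  have hsum : P.coeff j = ∑ m ∈ (Finset.range (n + 1)).filter (fun m => m % q = j),
      (-1 : ℤ) ^ ((m - j) / q) * (n.choose m : ℤ) := by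
    rw [hP, finset_sum_coeff, Finset.sum_filter]
    apply Finset.sum_congr rfl
    intro m _
    rw [coeff_C_mul, coeff_X_pow]
    by_cases hmj : m % q = j
    · have hmj' : m % p ^ α = j := hmj
      rw [if_pos hmj.symm, mul_one, if_pos hmj']
      have h1 : (m - j) / q = m / q := by
        have := Nat.div_add_mod m q
        have hmj2 : m - j = q * (m / q) := by omega
        rw [hmj2, Nat.mul_div_cancel_left _ hq]
      rw [h1]; ring
    · have hmj' : ¬ (m % p ^ α = j) := hmj
      rw [if_neg (fun h => hmj h.symm), mul_zero, if_neg hmj']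
  exact hsum ▸ dvd_trans (pow_dvd_pow (p:ℤ) hfk) hdvd
end
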